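/- arXiv:2512.03112 — 2 statements merged into one kernel-verified Lean document; each statement's English description precedes it below -/
import Mathlib

section
/- For a nonzero vector y ∈ ℝ^p and 1 ≤ s ≤ p, the normalized hard-thresholding vector H(y;s)/‖H(y;s)‖₂ is a global minimizer of ‖y - β‖₂² subject to ‖β‖₀ ≤ s and ‖β‖₂ = 1, where H(y;s) keeps the s largest-magnitude entries of y and zeroes out the rest. -/
lemma key {p : ℕ} (y : Fin p → ℝ) (S T : Finset (Fin p)) (hcard : T.card ≤ S.card)
    (hSmax : ∀ i ∈ S, ∀ j ∉ S, |y j| ≤ |y i|) :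
    ∑ j ∈ T, (y j)^2 ≤ ∑ i ∈ S, (y i)^2 := by
  have hT : ∑ j ∈ T ∩ S, (y j)^2 + ∑ j ∈ T \ S, (y j)^2 = ∑ j ∈ T, (y j)^2 :=
    Finset.sum_inter_add_sum_sdiff T S _
  have hS : ∑ j ∈ S ∩ T, (y j)^2 + ∑ j ∈ S \ T, (y j)^2 = ∑ j ∈ S, (y j)^2 :=
    Finset.sum_inter_add_sum_sdiff S T _
  rw [Finset.inter_comm] at hT
  have hc : (T \ S).card ≤ (S \ T).card := by
    have h1 := Finset.card_sdiff_add_card_inter T S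
    have h2 := Finset.card_sdiff_add_card_inter S T
    rw [Finset.inter_comm] at h1
    omega
  have hdiff : ∑ j ∈ T \ S, (y j)^2 ≤ ∑ j ∈ S \ T, (y j)^2 := by
    rcases Finset.eq_empty_or_nonempty (S \ T) with he | hne
    · rw [he, Finset.card_empty, Nat.le_zero, Finset.card_eq_zero] at hc
      rw [hc, he]
    · obtain ⟨i₀, hi₀, hmin⟩ := Finset.exists_min_image (S \ T) (fun i => (y i)^2) hne
      have hi₀S : i₀ ∈ S := (Finset.mem_sdiff.mp hi₀).1
      have h1 : ∑ j ∈ T \ S, (y j)^2 ≤ (T \ S).card • (y i₀)^2 := by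
        apply Finset.sum_le_card_nsmul
        intro j hj
        have hjS : j ∉ S := (Finset.mem_sdiff.mp hj).2
        have := hSmax i₀ hi₀S j hjS
        calc (y j)^2 = |y j|^2 := (sq_abs _).symm
          _ ≤ |y i₀|^2 := pow_le_pow_left₀ (abs_nonneg _) this 2
          _ = (y i₀)^2 := sq_abs _
      have h2 : (S \ T).card • (y i₀)^2 ≤ ∑ j ∈ S \ T, (y j)^2 :=
        Finset.card_nsmul_le_sum _ _ _ hmin
      have h3 : (T \ S).card • (y i₀)^2 ≤ (S \ T).card • (y i₀)^2 := by
        rw [nsmul_eq_mul, nsmul_eq_mul]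
        apply mul_le_mul_of_nonneg_right _ (sq_nonneg _)
        exact_mod_cast hc
      linarith
  linarith


set_option autoImplicit false

open Classical in
/-- number of nonzero entries -/
noncomputable def l0 {p : ℕ} (β : Fin p → ℝ) : ℕ :=
  (Finset.univ.filter fun j => β j ≠ 0).card

/-- the normalized hard-thresholding vector `H(y;s)/‖H(y;s)‖` is a global
minimizer of `‖y - β‖²` subject to `‖β‖₀ ≤ s` and `‖β‖ = 1`.  The hard-thresholding
operator is encoded by a set `S` of `s` indices of largest magnitude (ties broken by
any fixed rule). -/
theorem stmt1 (p s : ℕ) (hs : 1 ≤ s) (hsp : s ≤ p)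
    (y : EuclideanSpace ℝ (Fin p)) (hy : y ≠ 0)
    (S : Finset (Fin p)) (hScard : S.card = s)
    (hSmax : ∀ i ∈ S, ∀ j ∉ S, |y j| ≤ |y i|)
    (H : EuclideanSpace ℝ (Fin p)) (hH : ∀ j, H j = if j ∈ S then y j else 0) :
    H ≠ 0 ∧
    l0 (fun j => (‖H‖⁻¹ • H) j) ≤ s ∧ ‖‖H‖⁻¹ • H‖ = 1 ∧
    ∀ β : EuclideanSpace ℝ (Fin p), l0 (fun j => β j) ≤ s → ‖β‖ = 1 →
      ‖y - ‖H‖⁻¹ • H‖ ^ 2 ≤ ‖y - β‖ ^ 2 := by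
  classical
  have hHne : H ≠ 0 := by
    intro h0
    apply hy
    have hSne : S.Nonempty := Finset.card_pos.mp (by omega)
    obtain ⟨i₀, hi₀⟩ := hSne
    have hyS : ∀ i ∈ S, y i = 0 := by
      intro i hi
      have : H i = y i := by rw [hH i, if_pos hi]
      rw [← this, h0]; rfl
    ext j
    by_cases hj : j ∈ S
    · exact hyS j hj
    · have := hSmax i₀ hi₀ j hj
      rw [hyS i₀ hi₀] at this
      simpa using abs_nonpos_iff.mp (by simpa using this)
  have hHnorm : ‖H‖ ≠ 0 := norm_ne_zero_iff.mpr hHne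
  -- support of v := ‖H‖⁻¹ • H
  set v : EuclideanSpace ℝ (Fin p) := ‖H‖⁻¹ • H with hv
  have hvj : ∀ j, v j = ‖H‖⁻¹ * H j := fun j => rfl
  have hl0 : l0 (fun j => v j) ≤ s := by
    rw [← hScard]
    apply Finset.card_le_card
    intro j hj
    rw [Finset.mem_filter] at hj
    by_contra hjS
    apply hj.2
    show v j = 0
    rw [hvj j, hH j, if_neg hjS, mul_zero]
  have hvnorm : ‖v‖ = 1 := by
    rw [hv, norm_smul, norm_inv, norm_norm, inv_mul_cancel₀ hHnorm]
  refine ⟨hHne, hl0, hvnorm, ?_⟩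
  intro β hβ0 hβn
  -- inner products
  have hnormHsq : ‖H‖ ^ 2 = ∑ j ∈ S, (y j)^2 := by
    rw [← real_inner_self_eq_norm_sq, PiLp.inner_apply]
    simp only [RCLike.inner_apply, conj_trivial]
    rw [← Finset.sum_subset (Finset.subset_univ S)]
    · exact Finset.sum_congr rfl fun j hj => by rw [hH j, if_pos hj]; ring
    · intro j _ hj; rw [hH j, if_neg hj, mul_zero]
  have hinnerH : (inner ℝ y H : ℝ) = ‖H‖ ^ 2 := by
    rw [hnormHsq, PiLp.inner_apply]
    simp only [RCLike.inner_apply, conj_trivial]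
    rw [← Finset.sum_subset (Finset.subset_univ S)]
    · exact Finset.sum_congr rfl fun j hj => by rw [hH j, if_pos hj]; ring
    · intro j _ hj; rw [hH j, if_neg hj, zero_mul]
  have hinnerv : (inner ℝ y v : ℝ) = ‖H‖ := by
    rw [hv, real_inner_smul_right, hinnerH]
    field_simp
  -- bound inner y β
  set T : Finset (Fin p) := Finset.univ.filter fun j => β j ≠ 0 with hT
  have hTcard : T.card ≤ S.card := by rw [hScard]; exact hβ0
  have hβsq : ∑ j ∈ T, (β j)^2 = 1 := by
    have h1 : ∑ j ∈ T, (β j)^2 = ∑ j, (β j)^2 := by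
      apply Finset.sum_subset (Finset.subset_univ T)
      intro j _ hj
      rw [hT] at hj
      simp only [Finset.mem_filter, Finset.mem_univ, true_and, not_not] at hj
      rw [hj]; ring
    have h2 : ‖β‖^2 = ∑ j, (β j)^2 := by
      rw [← real_inner_self_eq_norm_sq, PiLp.inner_apply]
      simp only [RCLike.inner_apply, conj_trivial]
      exact Finset.sum_congr rfl fun j _ => (pow_two (β j)).symm
    rw [h1, ← h2, hβn, one_pow]
  have hinnerβ : (inner ℝ y β : ℝ) ≤ ‖H‖ := by
    have h1 : (inner ℝ y β : ℝ) = ∑ j ∈ T, y j * β j := by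
      rw [PiLp.inner_apply]
      simp only [RCLike.inner_apply, conj_trivial]
      rw [Finset.sum_congr (s₁ := Finset.univ) rfl fun j _ => mul_comm (β j) (y j)]
      rw [← Finset.sum_subset (Finset.subset_univ T)]
      intro j _ hj
      rw [hT] at hj
      simp only [Finset.mem_filter, Finset.mem_univ, true_and, not_not] at hj
      rw [hj, mul_zero]
    have hcs := Real.sum_mul_le_sqrt_mul_sqrt T (fun j => y j) (fun j => β j)
    have hykey : ∑ j ∈ T, (y j)^2 ≤ ‖H‖^2 := by
      rw [hnormHsq]; exact key (fun j => y j) S T hTcard hSmax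
    calc (inner ℝ y β : ℝ) = ∑ j ∈ T, y j * β j := h1
      _ ≤ Real.sqrt (∑ j ∈ T, (y j)^2) * Real.sqrt (∑ j ∈ T, (β j)^2) := by
          simpa using hcs
      _ ≤ Real.sqrt (‖H‖^2) * Real.sqrt 1 := by
          gcongr
          · rw [hβsq]
      _ = ‖H‖ := by
          rw [Real.sqrt_one, Real.sqrt_sq (norm_nonneg _), mul_one]
  -- conclude
  have e1 : ‖y - v‖ ^ 2 = ‖y‖^2 - 2 * (inner ℝ y v : ℝ) + ‖v‖^2 := norm_sub_sq_real y v
  have e2 : ‖y - β‖ ^ 2 = ‖y‖^2 - 2 * (inner ℝ y β : ℝ) + ‖β‖^2 := norm_sub_sq_real y β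
  rw [e1, e2, hvnorm, hβn, hinnerv]
  linarith
end

section
/- With the same setup, if ρ > ‖ZᵀWZ‖₂ strictly, then l(γ^{(k)}) - l(γ^{(k+1)}) ≥ ((ρ - ‖ZᵀWZ‖₂)/2)·‖γ^{(k+1)} - γ^{(k)}‖₂², and consequently ‖γ^{(k+1)} - γ^{(k)}‖₂ → 0 as k → ∞. -/
set_option autoImplicit false

open Matrix

lemma dot_mulVec_le {n : ℕ} (A : Matrix (Fin n) (Fin n) ℝ) (d : Fin n → ℝ) :
    d ⬝ᵥ A.mulVec d ≤ ‖Matrix.toEuclideanCLM (𝕜 := ℝ) A‖ * ∑ j, d j ^ 2 := by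
  set d' : EuclideanSpace ℝ (Fin n) := (WithLp.equiv 2 _).symm d with hd'
  have hnorm : ‖d'‖ = Real.sqrt (∑ j, d j ^ 2) := by
    rw [EuclideanSpace.norm_eq]
    congr 1
    apply Finset.sum_congr rfl
    intro j _
    simp [hd', sq_abs]
  have h1 : d ⬝ᵥ A.mulVec d = inner ℝ ((Matrix.toEuclideanCLM (𝕜 := ℝ) A) d') d' := by
    rw [hd', WithLp.equiv_symm_apply, Matrix.toEuclideanCLM_toLp]
    simp [PiLp.inner_apply, dotProduct, Matrix.toLin'_apply, mulVec, mul_comm]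
  rw [h1]
  calc inner ℝ ((Matrix.toEuclideanCLM (𝕜 := ℝ) A) d') d'
      ≤ ‖(Matrix.toEuclideanCLM (𝕜 := ℝ) A) d'‖ * ‖d'‖ := real_inner_le_norm _ _
    _ ≤ (‖Matrix.toEuclideanCLM (𝕜 := ℝ) A‖ * ‖d'‖) * ‖d'‖ := by
        gcongr; exact (Matrix.toEuclideanCLM (𝕜 := ℝ) A).le_opNorm d'
    _ = ‖Matrix.toEuclideanCLM (𝕜 := ℝ) A‖ * ∑ j, d j ^ 2 := by
        rw [mul_assoc, hnorm, Real.mul_self_sqrt (Finset.sum_nonneg fun j _ => sq_nonneg _)]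

lemma dot_sym {N : ℕ} (W : Matrix (Fin N) (Fin N) ℝ) (hWsym : Wᵀ = W)
    (x y : Fin N → ℝ) : x ⬝ᵥ W.mulVec y = y ⬝ᵥ W.mulVec x := by
  rw [Matrix.dotProduct_mulVec]
  nth_rewrite 1 [← hWsym]
  rw [Matrix.vecMul_transpose, dotProduct_comm]

lemma expansion {N p : ℕ} (Z : Matrix (Fin N) (Fin p) ℝ) (W : Matrix (Fin N) (Fin N) ℝ)
    (hWsym : Wᵀ = W) (t : Fin N → ℝ) (γ d : Fin p → ℝ) :
    (1/2) * ((Z.mulVec (γ + d) - t) ⬝ᵥ W.mulVec (Z.mulVec (γ + d) - t)) =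
      (1/2) * ((Z.mulVec γ - t) ⬝ᵥ W.mulVec (Z.mulVec γ - t))
      + (Zᵀ.mulVec (W.mulVec (Z.mulVec γ - t))) ⬝ᵥ d
      + (1/2) * (d ⬝ᵥ (Zᵀ * W * Z).mulVec d) := by
  set u := Z.mulVec γ - t with hu
  set v := Z.mulVec d with hv
  have h1 : Z.mulVec (γ + d) - t = u + v := by
    rw [Matrix.mulVec_add, hu, hv]; abel
  have h2 : (Zᵀ.mulVec (W.mulVec u)) ⬝ᵥ d = (W.mulVec u) ⬝ᵥ v := by
    rw [Matrix.mulVec_transpose, ← Matrix.dotProduct_mulVec, hv]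
  have h3 : d ⬝ᵥ (Zᵀ * W * Z).mulVec d = v ⬝ᵥ W.mulVec v := by
    rw [← Matrix.mulVec_mulVec, ← Matrix.mulVec_mulVec, Matrix.mulVec_transpose,
      dotProduct_comm, ← Matrix.dotProduct_mulVec, ← hv, dotProduct_comm]
  have hsym : u ⬝ᵥ W.mulVec v = v ⬝ᵥ W.mulVec u := dot_sym W hWsym u v
  rw [h1, h2, h3]
  simp only [dotProduct_add, add_dotProduct, Matrix.mulVec_add]
  rw [dotProduct_comm (W.mulVec u) v] at *
  linarith

/-- with `ρ > ‖ZᵀWZ‖₂` strictly, each MM step decreases the objective by at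
least `((ρ - ‖ZᵀWZ‖₂)/2)·‖γ⁽ᵏ⁺¹⁾ - γ⁽ᵏ⁾‖²`, and consequently
`‖γ⁽ᵏ⁺¹⁾ - γ⁽ᵏ⁾‖₂ → 0` as `k → ∞`. -/
theorem stmt5 (N p s : ℕ) (Z : Matrix (Fin N) (Fin p) ℝ) (w : Fin N → ℝ)
    (hw : ∀ i, 0 ≤ w i) (W : Matrix (Fin N) (Fin N) ℝ) (hW : W = Matrix.diagonal w)
    (t : Fin N → ℝ)
    (ρ : ℝ) (hρ : ρ > ‖Matrix.toEuclideanCLM (𝕜 := ℝ) (Zᵀ * W * Z)‖)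
    (l : (Fin p → ℝ) → ℝ)
    (hl : ∀ γ, l γ = (1 / 2) * ((Z.mulVec γ - t) ⬝ᵥ W.mulVec (Z.mulVec γ - t)))
    (g : (Fin p → ℝ) → (Fin p → ℝ) → ℝ)
    (hg : ∀ γ γm, g γ γm = l γm + (Zᵀ.mulVec (W.mulVec (Z.mulVec γm - t))) ⬝ᵥ (γ - γm)
        + (ρ / 2) * ((γ - γm) ⬝ᵥ (γ - γm)))
    (feasible : (Fin p → ℝ) → Prop)
    (hfeas : ∀ γ, feasible γ ↔ (l0 γ ≤ s ∧ Real.sqrt (∑ j, γ j ^ 2) = 1))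
    (γseq : ℕ → Fin p → ℝ)
    (h0 : feasible (γseq 0))
    (hiter : ∀ k : ℕ, feasible (γseq (k + 1)) ∧
        ∀ β, feasible β → g (γseq (k + 1)) (γseq k) ≤ g β (γseq k)) :
    (∀ k : ℕ, l (γseq k) - l (γseq (k + 1)) ≥
        ((ρ - ‖Matrix.toEuclideanCLM (𝕜 := ℝ) (Zᵀ * W * Z)‖) / 2) *
          (∑ j, (γseq (k + 1) j - γseq k j) ^ 2)) ∧
    Filter.Tendsto (fun k : ℕ => Real.sqrt (∑ j, (γseq (k + 1) j - γseq k j) ^ 2))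
      Filter.atTop (nhds 0) := by
  have hWsym : Wᵀ = W := by rw [hW]; exact Matrix.diagonal_transpose w
  set nA : ℝ := ‖Matrix.toEuclideanCLM (𝕜 := ℝ) (Zᵀ * W * Z)‖ with hnA
  have hfeasAll : ∀ k, feasible (γseq k) := by
    intro k
    induction k with
    | zero => exact h0
    | succ n _ => exact (hiter n).1
  have hlnn : ∀ γ, 0 ≤ l γ := by
    intro γ
    rw [hl, hW]
    have : 0 ≤ (Z.mulVec γ - t) ⬝ᵥ (Matrix.diagonal w).mulVec (Z.mulVec γ - t) := by
      apply Finset.sum_nonneg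
      intro i _
      simp only [Matrix.mulVec_diagonal]
      nlinarith [hw i, sq_nonneg ((Z.mulVec γ - t) i)]
    linarith
  -- the per-step inequality
  have main : ∀ k : ℕ, l (γseq k) - l (γseq (k + 1)) ≥
      ((ρ - nA) / 2) * (∑ j, (γseq (k + 1) j - γseq k j) ^ 2) := by
    intro k
    set d : Fin p → ℝ := γseq (k + 1) - γseq k with hd
    have hadd : γseq k + d = γseq (k + 1) := by rw [hd]; abel
    have hS : d ⬝ᵥ d = ∑ j, (γseq (k + 1) j - γseq k j) ^ 2 := by
      simp only [dotProduct, hd, Pi.sub_apply, sq]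
    set S : ℝ := ∑ j, (γseq (k + 1) j - γseq k j) ^ 2 with hSdef
    have hSnn : 0 ≤ S := Finset.sum_nonneg fun j _ => sq_nonneg _
    -- g comparison
    have hgle : g (γseq (k + 1)) (γseq k) ≤ g (γseq k) (γseq k) :=
      (hiter k).2 (γseq k) (hfeasAll k)
    have hgg : g (γseq k) (γseq k) = l (γseq k) := by
      rw [hg]; simp
    rw [hg, hgg] at hgle
    have hgrad : (Zᵀ.mulVec (W.mulVec (Z.mulVec (γseq k) - t))) ⬝ᵥ d
        + (ρ / 2) * S ≤ 0 := by
      rw [← hS] at *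
      linarith [hgle]
    -- quadratic expansion of l
    have hexp := expansion Z W hWsym t (γseq k) d
    rw [hadd, ← hl, ← hl] at hexp
    -- spectral bound
    have hq : d ⬝ᵥ (Zᵀ * W * Z).mulVec d ≤ nA * S := by
      rw [hSdef]
      have := dot_mulVec_le (Zᵀ * W * Z) d
      have heq : (∑ j, d j ^ 2) = ∑ j, (γseq (k + 1) j - γseq k j) ^ 2 := by
        apply Finset.sum_congr rfl; intro j _; rw [hd]; simp
      rw [heq] at this
      exact this
    nlinarith [hexp, hgrad, hq]
  refine ⟨main, ?_⟩
  -- convergence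
  set c : ℝ := (ρ - nA) / 2 with hc
  have hcpos : 0 < c := by rw [hc]; linarith
  set S : ℕ → ℝ := fun k => ∑ j, (γseq (k + 1) j - γseq k j) ^ 2 with hSdef
  have hSnn : ∀ k, 0 ≤ S k := fun k => Finset.sum_nonneg fun j _ => sq_nonneg _
  set L : ℕ → ℝ := fun k => l (γseq k) with hL
  have hmono : ∀ k, L (k + 1) ≤ L k := by
    intro k
    have h := main k
    have h2 : (0:ℝ) ≤ c * ∑ j, (γseq (k + 1) j - γseq k j) ^ 2 :=
      mul_nonneg hcpos.le (Finset.sum_nonneg fun j _ => sq_nonneg _)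
    simp only [hL]
    linarith
  have hanti : Antitone L := antitone_nat_of_succ_le hmono
  have hbdd : BddBelow (Set.range L) := ⟨0, by rintro x ⟨k, rfl⟩; exact hlnn _⟩
  have hLtend : Filter.Tendsto L Filter.atTop (nhds (⨅ k, L k)) :=
    tendsto_atTop_ciInf hanti hbdd
  have hLtend' : Filter.Tendsto (fun k => L (k + 1)) Filter.atTop (nhds (⨅ k, L k)) :=
    hLtend.comp (Filter.tendsto_add_atTop_nat 1)
  have hdiff : Filter.Tendsto (fun k => L k - L (k + 1)) Filter.atTop (nhds 0) := by
    have := hLtend.sub hLtend'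
    simpa using this
  have hStend : Filter.Tendsto S Filter.atTop (nhds 0) := by
    apply squeeze_zero hSnn (g := fun k => (1 / c) * (L k - L (k + 1)))
    · intro k
      have h1 : c * S k ≤ L k - L (k + 1) := by
        simp only [hL, hSdef]
        linarith [main k]
      calc S k ≤ (L k - L (k + 1)) / c := (le_div_iff₀' hcpos).mpr h1
        _ = (1 / c) * (L k - L (k + 1)) := by ring
    · have := hdiff.const_mul (1 / c)
      simpa using this
  have := (Real.continuous_sqrt.tendsto 0).comp hStend
  simpa using (by exact this : Filter.Tendsto (fun k => Real.sqrt (S k)) Filter.atTop (nhds (Real.sqrt 0)))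
end
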